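/- arXiv:2208.06648 — 2 statements merged into one kernel-verified Lean document; each statement's English description precedes it below -/
import Mathlib

section
/- The difference between the observed group mean and the observed population mean satisfies μ_g^O − μ^O = (α_{¬g}(1−r_g)/α) · [ ρ_g · √((1−α_g)/α_g) · σ_{X|G} + μ_g − μ_{¬g} − ρ_{¬g} · √((1−α_{¬g})/α_{¬g}) · σ_{X|Gᶜ} ], where α = r_g α_g + (1−r_g) α_{¬g}; consequently the population imputation bias decomposes as B_g^{pop} = B_g^{group} + (α_{¬g}(1−r_g)/α) · [ ρ_g √((1−α_g)/α_g) σ_{X|G} + μ_g − μ_{¬g} − ρ_{¬g} √((1−α_{¬g})/α_{¬g}) σ_{X|Gᶜ} ]. -/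
open MeasureTheory ProbabilityTheory

/-- Covariance of two real random variables under the measure `μ`. -/
noncomputable def condCov {Ω : Type*} [MeasurableSpace Ω] (μ : Measure Ω) (O X : Ω → ℝ) : ℝ :=
  ∫ ω, (O ω - ∫ x, O x ∂μ) * (X ω - ∫ x, X x ∂μ) ∂μ

lemma integral_cond_eq' {Ω : Type*} [MeasurableSpace Ω] (μ : Measure Ω) (t : Set Ω) (f : Ω → ℝ) :
    ∫ ω, f ω ∂(μ[|t]) = (μ t).toReal⁻¹ * ∫ ω in t, f ω ∂μ := by
  rw [ProbabilityTheory.cond, integral_smul_measure, ENNReal.toReal_inv, smul_eq_mul]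

lemma condCov_eq' {Ω : Type*} [MeasurableSpace Ω] (ν : Measure Ω) [IsProbabilityMeasure ν]
    (O X : Ω → ℝ) (hO : Integrable O ν) (hX : Integrable X ν)
    (hOX : Integrable (fun ω => O ω * X ω) ν) :
    condCov ν O X = (∫ ω, O ω * X ω ∂ν) - (∫ ω, O ω ∂ν) * (∫ ω, X ω ∂ν) := by
  unfold condCov
  set c := ∫ x, O x ∂ν with hc
  set d := ∫ x, X x ∂ν with hd
  have h : ∀ ω, (O ω - c) * (X ω - d) = O ω * X ω - c * X ω - (d * O ω - c * d) := by
    intro ω; ring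
  simp_rw [h]
  have e1 : Integrable (fun ω => O ω * X ω - c * X ω) ν := hOX.sub (hX.const_mul c)
  have e2 : Integrable (fun ω => d * O ω - c * d) ν := (hO.const_mul d).sub (integrable_const _)
  have e3 : Integrable (fun ω => c * X ω) ν := hX.const_mul c
  have e4 : Integrable (fun ω => d * O ω) ν := hO.const_mul d
  rw [integral_sub e1 e2, integral_sub hOX e3, integral_sub e4 (integrable_const _),
    integral_const_mul, integral_const_mul, integral_const]
  simp only [measureReal_def, measure_univ, ENNReal.toReal_one, smul_eq_mul, one_mul]
  ring

lemma sqrt_algebra' (p σ C : ℝ) (hp0 : 0 < p) (hp1 : p < 1) (hσ : 0 < σ) :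
    C / (Real.sqrt (p * (1 - p)) * σ) * Real.sqrt ((1 - p) / p) * σ = C / p := by
  have h1p : (0:ℝ) < 1 - p := by linarith
  have hsp : (0:ℝ) < Real.sqrt p := Real.sqrt_pos.mpr hp0
  have hs1p : (0:ℝ) < Real.sqrt (1 - p) := Real.sqrt_pos.mpr h1p
  rw [Real.sqrt_mul hp0.le, Real.sqrt_div h1p.le]
  have hq : Real.sqrt p * Real.sqrt p = p := Real.mul_self_sqrt hp0.le
  field_simp
  ring_nf
  rw [sq, hq]

/-- Decomposition of `μ_g^O − μ^O` and of the population imputation bias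
`B_g^pop` in terms of the missingness processes of the two groups. -/
theorem population_bias_decomposition
    {Ω : Type*} [MeasurableSpace Ω] (μ : Measure Ω) [IsProbabilityMeasure μ]
    (X O : Ω → ℝ) (G : Set Ω)
    (hXm : Measurable X) (hOm : Measurable O) (hG : MeasurableSet G)
    (hX2 : MemLp X 2 μ)
    (hO01 : ∀ ω, O ω = 0 ∨ O ω = 1)
    (αg αng μg μng μgO μngO μO σXG σXnG ρg ρng rg α BgGroup BgPop : ℝ)
    (hαg : αg = ∫ ω, O ω ∂(μ[|G]))
    (hαng : αng = ∫ ω, O ω ∂(μ[|Gᶜ]))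
    (hμg : μg = ∫ ω, X ω ∂(μ[|G]))
    (hμng : μng = ∫ ω, X ω ∂(μ[|Gᶜ]))
    (hμgO : μgO = ∫ ω, X ω ∂(μ[|O ⁻¹' {1} ∩ G]))
    (hμngO : μngO = ∫ ω, X ω ∂(μ[|O ⁻¹' {1} ∩ Gᶜ]))
    (hμO : μO = ∫ ω, X ω ∂(μ[|O ⁻¹' {1}]))
    (hσXG : σXG = Real.sqrt (variance X (μ[|G])))
    (hσXnG : σXnG = Real.sqrt (variance X (μ[|Gᶜ])))
    (hρg : ρg = condCov (μ[|G]) O X / (Real.sqrt (αg * (1 - αg)) * σXG))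
    (hρng : ρng = condCov (μ[|Gᶜ]) O X / (Real.sqrt (αng * (1 - αng)) * σXnG))
    (hrg : rg = (μ G).toReal)
    (hα : α = ∫ ω, O ω ∂μ)
    (hBgGroup : BgGroup = (∫ ω, X ω ∂(μ[|O ⁻¹' {0} ∩ G])) - μgO)
    (hBgPop : BgPop = (∫ ω, X ω ∂(μ[|O ⁻¹' {0} ∩ G])) - μO)
    (hr0 : 0 < rg) (hr1 : rg < 1)
    (hαg0 : 0 < αg) (hαg1 : αg < 1)
    (hαng0 : 0 < αng) (hαng1 : αng < 1)
    (hσpos : 0 < σXG) (hσnpos : 0 < σXnG)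
    (hpos1g : 0 < μ (O ⁻¹' {1} ∩ G)) (hpos0g : 0 < μ (O ⁻¹' {0} ∩ G))
    (hpos1ng : 0 < μ (O ⁻¹' {1} ∩ Gᶜ)) :
    μgO - μO = (αng * (1 - rg) / α) *
        (ρg * Real.sqrt ((1 - αg) / αg) * σXG + μg - μng -
          ρng * Real.sqrt ((1 - αng) / αng) * σXnG) ∧
    BgPop = BgGroup + (αng * (1 - rg) / α) *
        (ρg * Real.sqrt ((1 - αg) / αg) * σXG + μg - μng -
          ρng * Real.sqrt ((1 - αng) / αng) * σXnG) := by
  have hs1 : MeasurableSet (O ⁻¹' {1}) := hOm (measurableSet_singleton 1)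
  set s1 : Set Ω := O ⁻¹' {1} with hs1def
  -- O and O*X as indicators
  have hOind : O = s1.indicator (fun _ => (1:ℝ)) := by
    funext ω
    rcases hO01 ω with h | h
    · have : ω ∉ s1 := by simp [hs1def, Set.mem_preimage, h]
      simp [Set.indicator_of_notMem this, h]
    · have : ω ∈ s1 := by simp [hs1def, Set.mem_preimage, h]
      simp [Set.indicator_of_mem this, h]
  have hOXind : (fun ω => O ω * X ω) = s1.indicator X := by
    funext ω
    rcases hO01 ω with h | h
    · have : ω ∉ s1 := by simp [hs1def, Set.mem_preimage, h]
      simp [Set.indicator_of_notMem this, h]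
    · have : ω ∈ s1 := by simp [hs1def, Set.mem_preimage, h]
      simp [Set.indicator_of_mem this, h]
  have hXint : Integrable X μ := hX2.integrable (by norm_num)
  -- real quantities
  set g := (μ G).toReal with hgdef
  have hgpos : 0 < g := hrg ▸ hr0
  have hg1 : g < 1 := hrg ▸ hr1
  have hμG0 : μ G ≠ 0 := by
    intro h; rw [hgdef, h] at hgpos; simp at hgpos
  have hGc : (μ Gᶜ).toReal = 1 - g := by
    rw [prob_compl_eq_one_sub hG,
      ENNReal.toReal_sub_of_le prob_le_one ENNReal.one_ne_top, ENNReal.toReal_one]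
  have hμGc0 : μ Gᶜ ≠ 0 := by
    intro h; rw [h] at hGc; simp at hGc; linarith
  set a := (μ (s1 ∩ G)).toReal with hadef
  set b := (μ (s1 ∩ Gᶜ)).toReal with hbdef
  have hapos : 0 < a := ENNReal.toReal_pos hpos1g.ne' (measure_ne_top μ _)
  have hbpos : 0 < b := ENNReal.toReal_pos hpos1ng.ne' (measure_ne_top μ _)
  have hμ1g0 : μ (s1 ∩ G) ≠ 0 := hpos1g.ne'
  have hμ1ng0 : μ (s1 ∩ Gᶜ) ≠ 0 := hpos1ng.ne'
  -- splitting of s1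
  have hsplit : μ s1 = μ (s1 ∩ G) + μ (s1 ∩ Gᶜ) := by
    rw [← measure_inter_add_diff s1 hG, Set.diff_eq]
  have hcval : (μ s1).toReal = a + b := by
    rw [hsplit, ENNReal.toReal_add (measure_ne_top μ _) (measure_ne_top μ _)]
  -- integrals
  set IG := ∫ ω in G, X ω ∂μ with hIG
  set ING := ∫ ω in Gᶜ, X ω ∂μ with hING
  set I1G := ∫ ω in s1 ∩ G, X ω ∂μ with hI1G
  set I1NG := ∫ ω in s1 ∩ Gᶜ, X ω ∂μ with hI1NG
  have hdisj : Disjoint (s1 ∩ G) (s1 ∩ Gᶜ) :=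
    (disjoint_compl_right (a := G)).mono Set.inter_subset_right Set.inter_subset_right
  have hIsplit : ∫ ω in s1, X ω ∂μ = I1G + I1NG := by
    rw [← Set.inter_union_compl s1 G,
      setIntegral_union hdisj (hs1.inter hG.compl) hXint.integrableOn hXint.integrableOn]
  -- set-integral of O over a set t
  have hOset : ∀ t : Set Ω, MeasurableSet t → ∫ ω in t, O ω ∂μ = (μ (s1 ∩ t)).toReal := by
    intro t ht
    rw [hOind, integral_indicator hs1]
    rw [setIntegral_const, measureReal_def, Measure.restrict_apply hs1, smul_eq_mul, mul_one]
  have hOXset : ∀ t : Set Ω, MeasurableSet t →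
      ∫ ω in t, O ω * X ω ∂μ = ∫ ω in s1 ∩ t, X ω ∂μ := by
    intro t ht
    rw [hOXind, integral_indicator hs1, Measure.restrict_restrict hs1]
  -- expressions for all quantities
  have hαg' : αg = g⁻¹ * a := by
    rw [hαg, integral_cond_eq', hOset G hG]
  have hαng' : αng = (1 - g)⁻¹ * b := by
    rw [hαng, integral_cond_eq', hGc, hOset Gᶜ hG.compl]
  have hμg' : μg = g⁻¹ * IG := by rw [hμg, integral_cond_eq']
  have hμng' : μng = (1 - g)⁻¹ * ING := by rw [hμng, integral_cond_eq', hGc]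
  have hμgO' : μgO = a⁻¹ * I1G := by rw [hμgO, integral_cond_eq']
  have hμngO' : μngO = b⁻¹ * I1NG := by rw [hμngO, integral_cond_eq']
  have hμO' : μO = (a + b)⁻¹ * (I1G + I1NG) := by
    rw [hμO, integral_cond_eq', hcval, hIsplit]
  have hα' : α = a + b := by
    rw [hα, ← setIntegral_univ, hOset Set.univ MeasurableSet.univ, Set.inter_univ, hcval]
  -- integrability under conditional measures
  have hcondint : ∀ t : Set Ω, MeasurableSet t → μ t ≠ 0 →
      Integrable X (μ[|t]) ∧ Integrable O (μ[|t]) ∧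
        Integrable (fun ω => O ω * X ω) (μ[|t]) := by
    intro t ht ht0
    have hsm : (μ t)⁻¹ ≠ (⊤ : ENNReal) := ENNReal.inv_ne_top.mpr ht0
    rw [ProbabilityTheory.cond]
    refine ⟨hXint.integrableOn.smul_measure hsm, ?_, ?_⟩
    · rw [hOind]
      exact ((integrable_const (1:ℝ)).indicator hs1).integrableOn.smul_measure hsm
    · rw [hOXind]
      exact (hXint.indicator hs1).integrableOn.smul_measure hsm
  -- covariance computations
  haveI hPG : IsProbabilityMeasure (μ[|G]) := cond_isProbabilityMeasure hμG0
  haveI hPGc : IsProbabilityMeasure (μ[|Gᶜ]) := cond_isProbabilityMeasure hμGc0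
  obtain ⟨hX_G, hO_G, hOX_G⟩ := hcondint G hG hμG0
  obtain ⟨hX_Gc, hO_Gc, hOX_Gc⟩ := hcondint Gᶜ hG.compl hμGc0
  have hCovG : condCov (μ[|G]) O X = g⁻¹ * I1G - αg * μg := by
    rw [condCov_eq' _ _ _ hO_G hX_G hOX_G, integral_cond_eq', hOXset G hG,
      ← hαg, ← hμg]
  have hCovGc : condCov (μ[|Gᶜ]) O X = (1 - g)⁻¹ * I1NG - αng * μng := by
    rw [condCov_eq' _ _ _ hO_Gc hX_Gc hOX_Gc, integral_cond_eq', hGc, hOXset Gᶜ hG.compl,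
      ← hαng, ← hμng]
  -- rho terms
  have hTg : ρg * Real.sqrt ((1 - αg) / αg) * σXG = μgO - μg := by
    rw [hρg, sqrt_algebra' αg σXG _ hαg0 hαg1 hσpos, hCovG, hμgO', hαg']
    field_simp
    try ring
  have hTng : ρng * Real.sqrt ((1 - αng) / αng) * σXnG = μngO - μng := by
    rw [hρng, sqrt_algebra' αng σXnG _ hαng0 hαng1 hσnpos, hCovGc, hμngO', hαng']
    have h1g : (1:ℝ) - g ≠ 0 := by linarith
    field_simp
    try ring
  -- final algebra
  have hmain : μgO - μO = (αng * (1 - rg) / α) *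
      (ρg * Real.sqrt ((1 - αg) / αg) * σXG + μg - μng -
        ρng * Real.sqrt ((1 - αng) / αng) * σXnG) := by
    rw [hTg, hTng, hαng', hα', hrg, hμgO', hμngO', hμO']
    have h1g : (1:ℝ) - g ≠ 0 := by linarith
    have hab : a + b ≠ 0 := by positivity
    field_simp
    ring
  exact ⟨hmain, by rw [hBgPop, hBgGroup]; linarith⟩
end

section
/- Under the assumption that the unobserved-data variances agree across groups, Var(X | {O=0} ∩ G) = Var(X | {O=0} ∩ Gᶜ), the reconstruction error gaps are differences of squared imputation biases: Δ^{group}_g = (B_g^{group})² − (B_{¬g}^{group})² and Δ^{pop}_g = (B_g^{pop})² − (B_{¬g}^{pop})². -/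
open MeasureTheory ProbabilityTheory

private lemma memLp_cond {Ω : Type*} [MeasurableSpace Ω] {μ : Measure Ω} [IsProbabilityMeasure μ]
    {X : Ω → ℝ} (hX2 : MemLp X 2 μ) (s : Set Ω) :
    MemLp X 2 (μ[|s]) := by
  rcases eq_or_ne (μ s) 0 with h | h
  · have hr : μ.restrict s = 0 := Measure.restrict_eq_zero.mpr h
    rw [ProbabilityTheory.cond, hr, smul_zero]
    exact ⟨aestronglyMeasurable_zero_measure X, by simp⟩
  · refine ⟨hX2.aestronglyMeasurable.mono_ac (cond_absolutelyContinuous), ?_⟩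
    rw [ProbabilityTheory.cond,
      eLpNorm_smul_measure_of_ne_top (by norm_num : (2 : ENNReal) ≠ ⊤)]
    refine ENNReal.mul_lt_top ?_
      ((eLpNorm_mono_measure X Measure.restrict_le_self).trans_lt hX2.2)
    exact ENNReal.rpow_lt_top_of_nonneg (by norm_num) (by simp [h])

private lemma key {Ω : Type*} [MeasurableSpace Ω] (ν : Measure Ω) [IsProbabilityMeasure ν]
    {X : Ω → ℝ} (hX2 : MemLp X 2 ν) (c : ℝ) :
    ∫ ω, (c - X ω) ^ 2 ∂ν = variance X ν + ((∫ ω, X ω ∂ν) - c) ^ 2 := by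
  have hXi : Integrable X ν := hX2.integrable one_le_two
  have hXsq : Integrable (fun ω => X ω ^ 2) ν := hX2.integrable_sq
  have h1 : ∫ ω, (c - X ω) ^ 2 ∂ν = ∫ ω, (c ^ 2 - 2 * c * X ω + X ω ^ 2) ∂ν := by
    congr 1; funext ω; ring
  have hA : Integrable (fun ω => c ^ 2 - 2 * c * X ω) ν :=
    (integrable_const _).sub (hXi.const_mul _)
  rw [h1, integral_add hA hXsq,
    integral_sub (integrable_const _) (hXi.const_mul _), integral_const_mul, integral_const,
    variance_eq_sub hX2]
  simp only [measure_univ, probReal_univ, ENNReal.toReal_one, smul_eq_mul, one_mul, Pi.pow_apply]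
  ring

/-- When unobserved-data variances agree across groups, the reconstruction
error gaps are differences of squared imputation biases. -/
theorem gaps_as_squared_bias_differences
    {Ω : Type*} [MeasurableSpace Ω] (μ : Measure Ω) [IsProbabilityMeasure μ]
    (X O : Ω → ℝ) (G : Set Ω)
    (hXm : Measurable X) (hOm : Measurable O) (hG : MeasurableSet G)
    (hX2 : MemLp X 2 μ)
    (hO01 : ∀ ω, O ω = 0 ∨ O ω = 1)
    (μgO μngO μO LgGroup LngGroup LgPop LngPop
      BgGroup BngGroup BgPop BngPop ΔGroup ΔPop : ℝ)
    (hμgO : μgO = ∫ ω, X ω ∂(μ[|O ⁻¹' {1} ∩ G]))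
    (hμngO : μngO = ∫ ω, X ω ∂(μ[|O ⁻¹' {1} ∩ Gᶜ]))
    (hμO : μO = ∫ ω, X ω ∂(μ[|O ⁻¹' {1}]))
    (hLgGroup : LgGroup = ∫ ω, (μgO - X ω) ^ 2 ∂(μ[|O ⁻¹' {0} ∩ G]))
    (hLngGroup : LngGroup = ∫ ω, (μngO - X ω) ^ 2 ∂(μ[|O ⁻¹' {0} ∩ Gᶜ]))
    (hLgPop : LgPop = ∫ ω, (μO - X ω) ^ 2 ∂(μ[|O ⁻¹' {0} ∩ G]))
    (hLngPop : LngPop = ∫ ω, (μO - X ω) ^ 2 ∂(μ[|O ⁻¹' {0} ∩ Gᶜ]))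
    (hBgGroup : BgGroup = (∫ ω, X ω ∂(μ[|O ⁻¹' {0} ∩ G])) - μgO)
    (hBngGroup : BngGroup = (∫ ω, X ω ∂(μ[|O ⁻¹' {0} ∩ Gᶜ])) - μngO)
    (hBgPop : BgPop = (∫ ω, X ω ∂(μ[|O ⁻¹' {0} ∩ G])) - μO)
    (hBngPop : BngPop = (∫ ω, X ω ∂(μ[|O ⁻¹' {0} ∩ Gᶜ])) - μO)
    (hΔGroup : ΔGroup = LgGroup - LngGroup)
    (hΔPop : ΔPop = LgPop - LngPop)
    (hpos1g : 0 < μ (O ⁻¹' {1} ∩ G)) (hpos0g : 0 < μ (O ⁻¹' {0} ∩ G))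
    (hpos1ng : 0 < μ (O ⁻¹' {1} ∩ Gᶜ)) (hpos0ng : 0 < μ (O ⁻¹' {0} ∩ Gᶜ))
    (hpos1 : 0 < μ (O ⁻¹' {1}))
    (hvar : variance X (μ[|O ⁻¹' {0} ∩ G]) = variance X (μ[|O ⁻¹' {0} ∩ Gᶜ])) :
    ΔGroup = BgGroup ^ 2 - BngGroup ^ 2 ∧ ΔPop = BgPop ^ 2 - BngPop ^ 2 := by
  have hPg : IsProbabilityMeasure (μ[|O ⁻¹' {0} ∩ G]) :=
    cond_isProbabilityMeasure hpos0g.ne'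
  have hPng : IsProbabilityMeasure (μ[|O ⁻¹' {0} ∩ Gᶜ]) :=
    cond_isProbabilityMeasure hpos0ng.ne'
  have hMg := memLp_cond hX2 (O ⁻¹' {0} ∩ G)
  have hMng := memLp_cond hX2 (O ⁻¹' {0} ∩ Gᶜ)
  have k1 := key _ hMg μgO
  have k2 := key _ hMng μngO
  have k3 := key _ hMg μO
  have k4 := key _ hMng μO
  constructor
  · rw [hΔGroup, hLgGroup, hLngGroup, k1, k2, hvar, hBgGroup, hBngGroup]
    ring
  · rw [hΔPop, hLgPop, hLngPop, k3, k4, hvar, hBgPop, hBngPop]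
    ring
end
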